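/- Let s, T, V be real polynomials in x = (x₁, …, x_n), let A be a real polynomial in (x, a) with a = (a₁, …, a_m), let f₁, …, f_n be real polynomials in (x, a), let g be an n×q matrix of real polynomials in x, and let h = (h₁, …, h_q) be a vector of real polynomials in x (the polynomial static feedback controller). Define the closed-loop polynomial vector field f̃ᵢ(x,a) := fᵢ(x,a) + Σ_{j=1}^q gᵢⱼ(x)·hⱼ(x). Suppose there exist sum-of-squares polynomials λ₁, λ₂ in x, a real polynomial λ₃ in (x, a), a sum-of-squares polynomial λ₄ in (x, a), and ε > 0 such that: (i) s − λ₁·(1 − V) is SOS; (ii) (1 − V) − λ₂·T is SOS; (iii) −Σ_{i=1}^n (∂V/∂x_i)·f̃ᵢ − ε − λ₃·(V − 1) − λ₄·A is SOS. Then for every differentiable trajectory x : [0,∞) → ℝⁿ and every signal a : [0,∞) → ℝᵐ satisfying ẋ(t) = f(x(t), a(t)) + g(x(t))·h(x(t)) and A(x(t), a(t)) ≥ 0 for all t ≥ 0, if T(x(0)) ≥ 0 then s(x(t)) ≥ 0 for all t ≥ 0; i.e., the reachable set of the closed-loop system with the secondary controller from 𝒯 is contained in 𝒮. -/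

import Mathlib

open MvPolynomial

/-- A real polynomial is a sum-of-squares (SOS) polynomial if it is a finite
sum of squares of polynomials. -/
def IsSOS {σ : Type*} (p : MvPolynomial σ ℝ) : Prop :=
  ∃ (k : ℕ) (q : Fin k → MvPolynomial σ ℝ), p = ∑ j, (q j) ^ 2

lemma IsSOS.eval_nonneg {σ : Type*} {p : MvPolynomial σ ℝ} (hp : IsSOS p)
    (v : σ → ℝ) : 0 ≤ eval v p := by
  obtain ⟨k, q, rfl⟩ := hp
  simp only [map_sum, map_pow]
  exact Finset.sum_nonneg fun j _ => sq_nonneg _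

/-- Chain rule for evaluating a multivariate polynomial along a differentiable curve. -/
lemma hasDerivAt_eval_comp {σ : Type*} [Fintype σ] [DecidableEq σ]
    (c : ℝ → σ → ℝ) (c' : σ → ℝ) (t : ℝ)
    (hc : ∀ i, HasDerivAt (fun u => c u i) (c' i) t) (p : MvPolynomial σ ℝ) :
    HasDerivAt (fun u => eval (c u) p) (∑ i, eval (c t) (pderiv i p) * c' i) t := by
  induction p using MvPolynomial.induction_on with
  | C r => simpa using hasDerivAt_const t r
  | add p q hp hq =>
      have := hp.add hq
      simpa [add_mul, Finset.sum_add_distrib, Pi.add_def] using this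
  | mul_X p i hp =>
      have h2 : HasDerivAt (fun u => eval (c u) p * c u i)
          ((∑ j, eval (c t) (pderiv j p) * c' j) * c t i + eval (c t) p * c' i) t :=
        hp.mul (hc i)
      have key : (∑ j, eval (c t) (pderiv j (p * X i)) * c' j)
          = (∑ j, eval (c t) (pderiv j p) * c' j) * c t i + eval (c t) p * c' i := by
        have hterm : ∀ j ∈ Finset.univ, eval (c t) (pderiv j (p * X i)) * c' j
            = eval (c t) (pderiv j p) * c' j * c t i
              + (if j = i then eval (c t) p * c' i else 0) := by
          intro j _
          rw [pderiv_mul, pderiv_X]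
          by_cases hji : j = i
          · subst hji; simp [Pi.single_apply]; ring
          · simp [Pi.single_apply, hji]; ring
        rw [Finset.sum_congr rfl hterm, Finset.sum_add_distrib,
          Finset.sum_ite_eq' Finset.univ i, Finset.sum_mul]
        simp
      have hfun : (fun u => eval (c u) (p * X i)) = fun u => eval (c u) p * c u i := by
        funext u; simp
      rw [hfun, key]
      exact h2

/-- Barrier lemma: if `φ` is differentiable on `[0,∞)` with `φ 0 ≤ 1` and the
derivative is negative whenever `φ = 1`, then `φ ≤ 1` on `[0,∞)`. -/
lemma barrier (φ φ' : ℝ → ℝ) (hφ : ∀ t, 0 ≤ t → HasDerivAt φ (φ' t) t)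
    (h0 : φ 0 ≤ 1) (hd : ∀ t, 0 ≤ t → φ t = 1 → φ' t < 0) :
    ∀ t, 0 ≤ t → φ t ≤ 1 := by
  by_contra hcon
  push_neg at hcon
  obtain ⟨t₁, ht₁0, ht₁⟩ := hcon
  have hcont : ContinuousOn φ (Set.Icc 0 t₁) := fun u hu =>
    ((hφ u hu.1).continuousAt).continuousWithinAt
  set S : Set ℝ := Set.Icc 0 t₁ ∩ φ ⁻¹' Set.Iic 1 with hS
  have hSne : S.Nonempty := ⟨0, ⟨le_refl 0, ht₁0⟩, h0⟩
  have hSbdd : BddAbove S := ⟨t₁, fun u hu => hu.1.2⟩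
  have hScl : IsClosed S :=
    hcont.preimage_isClosed_of_isClosed isClosed_Icc isClosed_Iic
  obtain ⟨τ, hτeq⟩ : ∃ τ, τ = sSup S := ⟨_, rfl⟩
  have hτS : τ ∈ S := hτeq ▸ hScl.csSup_mem hSne hSbdd
  have hτ0 : 0 ≤ τ := hτS.1.1
  have hτle : φ τ ≤ 1 := hτS.2
  have hτlt : τ < t₁ := lt_of_le_of_ne hτS.1.2 (by
    rintro rfl; exact absurd hτS.2 (not_le.mpr ht₁))
  have hgt : ∀ u, τ < u → u ≤ t₁ → 1 < φ u := by
    intro u hu1 hu2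
    by_contra hle
    push_neg at hle
    have hu0 : (0:ℝ) ≤ u := le_trans hτ0 hu1.le
    have : u ∈ S := ⟨⟨hu0, hu2⟩, hle⟩
    exact absurd (hτeq ▸ le_csSup hSbdd this) (not_le.mpr hu1)
  have htend : Filter.Tendsto φ (nhdsWithin τ (Set.Ioi τ)) (nhds (φ τ)) :=
    ((hφ τ hτ0).continuousAt.continuousWithinAt)
  have hev : ∀ᶠ u in nhdsWithin τ (Set.Ioi τ), 1 ≤ φ u := by
    filter_upwards [Ioo_mem_nhdsGT_of_mem (Set.mem_Ico.mpr ⟨le_refl τ, hτlt⟩)] with u hu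
    exact (hgt u hu.1 hu.2.le).le
  have hτ1 : φ τ = 1 := le_antisymm hτle (ge_of_tendsto htend hev)
  have hslope : Filter.Tendsto (slope φ τ) (nhdsWithin τ (Set.Ioi τ)) (nhds (φ' τ)) :=
    (hasDerivAt_iff_tendsto_slope.mp (hφ τ hτ0)).mono_left
      (nhdsWithin_mono τ (fun u hu => ne_of_gt hu))
  have hnn : 0 ≤ φ' τ := by
    refine ge_of_tendsto hslope ?_
    filter_upwards [Ioo_mem_nhdsGT_of_mem (Set.mem_Ico.mpr ⟨le_refl τ, hτlt⟩)] with u hu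
    rw [slope_def_field]
    apply div_nonneg
    · have := hgt u hu.1 hu.2.le
      linarith
    · linarith [hu.1]
  exact absurd hnn (not_le.mpr (hd τ hτ0 hτ1))

/-- Theorem 2 of the paper (with slack margin `ε > 0` of condition (19)):
for the closed-loop vector field `f̃ᵢ = fᵢ + ∑ⱼ gᵢⱼ·hⱼ` obtained by adding the
polynomial secondary controller `u_s = h(x)`, the three SOS conditions imply
that every trajectory of `ẋ = f(x,a) + g(x)h(x)` starting in `{T ≥ 0}` under
the attack constraint `A(x,a) ≥ 0` remains in the safe set `{s ≥ 0}`. -/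
theorem safety_secondary {n m q : ℕ}
    (s T V : MvPolynomial (Fin n) ℝ)
    (A : MvPolynomial (Fin n ⊕ Fin m) ℝ)
    (f : Fin n → MvPolynomial (Fin n ⊕ Fin m) ℝ)
    (g : Fin n → Fin q → MvPolynomial (Fin n) ℝ)
    (h : Fin q → MvPolynomial (Fin n) ℝ)
    (lam1 lam2 : MvPolynomial (Fin n) ℝ)
    (lam3 lam4 : MvPolynomial (Fin n ⊕ Fin m) ℝ)
    (ε : ℝ) (hε : 0 < ε)
    (hlam1 : IsSOS lam1) (hlam2 : IsSOS lam2) (hlam4 : IsSOS lam4)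
    (ftilde : Fin n → MvPolynomial (Fin n ⊕ Fin m) ℝ)
    (hftilde : ∀ i, ftilde i = f i + rename Sum.inl (∑ j, g i j * h j))
    (c1 : IsSOS (s - lam1 * (1 - V)))
    (c2 : IsSOS ((1 - V) - lam2 * T))
    (c3 : IsSOS (-(∑ i, (rename Sum.inl (pderiv i V)) * ftilde i) - C ε
        - lam3 * ((rename Sum.inl V) - 1) - lam4 * A)) :
    ∀ (x : ℝ → Fin n → ℝ) (a : ℝ → Fin m → ℝ),
      (∀ t : ℝ, 0 ≤ t →
        HasDerivAt x (fun i => eval (Sum.elim (x t) (a t)) (ftilde i)) t) →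
      (∀ t : ℝ, 0 ≤ t → 0 ≤ eval (Sum.elim (x t) (a t)) A) →
      0 ≤ eval (x 0) T → ∀ t : ℝ, 0 ≤ t → 0 ≤ eval (x t) s := by
  intro x a hx hA hT0 t ht
  set φ : ℝ → ℝ := fun u => eval (x u) V with hφdef
  set ψ : ℝ → ℝ := fun u =>
    ∑ i, eval (x u) (pderiv i V) * eval (Sum.elim (x u) (a u)) (ftilde i) with hψdef
  have hder : ∀ u, 0 ≤ u → HasDerivAt φ (ψ u) u := by
    intro u hu
    exact hasDerivAt_eval_comp x _ u (fun i => hasDerivAt_pi.mp (hx u hu) i) V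
  have h0 : φ 0 ≤ 1 := by
    have hkey := c2.eval_nonneg (x 0)
    have h2 := hlam2.eval_nonneg (x 0)
    simp only [map_sub, map_mul, map_one] at hkey
    nlinarith [mul_nonneg h2 hT0]
  have hd : ∀ u, 0 ≤ u → φ u = 1 → ψ u < 0 := by
    intro u hu hu1
    have hkey := c3.eval_nonneg (Sum.elim (x u) (a u))
    have h4 := hlam4.eval_nonneg (Sum.elim (x u) (a u))
    have hAu := hA u hu
    simp only [map_sub, map_neg, map_sum, map_mul, map_one, eval_C, eval_rename,
      Sum.elim_comp_inl] at hkey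
    have hVu : eval (x u) V = 1 := hu1
    rw [hVu] at hkey
    have hψu : ψ u = ∑ i, eval (x u) (pderiv i V)
        * eval (Sum.elim (x u) (a u)) (ftilde i) := rfl
    nlinarith [mul_nonneg h4 hAu]
  have hVle : φ t ≤ 1 := barrier φ ψ hder h0 hd t ht
  have hkey := c1.eval_nonneg (x t)
  have h1 := hlam1.eval_nonneg (x t)
  simp only [map_sub, map_mul, map_one] at hkey
  nlinarith [mul_nonneg h1 (by linarith : (0:ℝ) ≤ 1 - eval (x t) V)]
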